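/- Let L ⊆ E be a subspace that is isotropic (⟨e,e′⟩ = 0 for all e, e′ ∈ L) and closed under the Courant bracket (⟦e,e′⟧ ∈ L for all e, e′ ∈ L). Then the Courant bracket restricted to L satisfies the Jacobi identity: ⟦⟦e₁,e₂⟧,e₃⟧ + ⟦⟦e₂,e₃⟧,e₁⟧ + ⟦⟦e₃,e₁⟧,e₂⟧ = 0 for all e₁, e₂, e₃ ∈ L; hence a Dirac structure of the omni-Lie 2-algebra gl(𝕍) ⊕ 𝕍, with the Courant bracket, is a strict Lie 2-algebra. -/

import Mathlib

open LinearMap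

noncomputable section

namespace Omni

variable {V₀ V₁ : Type*}
  [AddCommGroup V₀] [Module ℝ V₀] [AddCommGroup V₁] [Module ℝ V₁]

variable (d : V₁ →ₗ[ℝ] V₀)

/-- `End⁰`: pairs `(A₀, A₁)` of endomorphisms with `A₀ ∘ d = d ∘ A₁`. -/
def End0 : Submodule ℝ ((V₀ →ₗ[ℝ] V₀) × (V₁ →ₗ[ℝ] V₁)) where
  carrier := {A | A.1 ∘ₗ d = d ∘ₗ A.2}
  add_mem' := by
    intro a b ha hb
    simp only [Set.mem_setOf_eq] at *
    simp [add_comp, comp_add, ha, hb]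
  zero_mem' := by
    simp only [Set.mem_setOf_eq]
    simp
  smul_mem' := by
    intro c a ha
    simp only [Set.mem_setOf_eq] at *
    simp [smul_comp, comp_smul, ha]

lemma mem_End0 {A : (V₀ →ₗ[ℝ] V₀) × (V₁ →ₗ[ℝ] V₁)} :
    A ∈ End0 d ↔ A.1 ∘ₗ d = d ∘ₗ A.2 := Iff.rfl

/-- Morphism space of `gl(𝕍)`:  `End⁰ ⊕ End¹`. -/
abbrev Gl := ↥(End0 d) × (V₀ →ₗ[ℝ] V₁)

/-- Morphism space of the omni-Lie 2-algebra `gl(𝕍) ⊕ 𝕍`. -/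
abbrev E := Gl d × (V₀ × V₁)

/-- `δ : End¹ → End⁰`, `δφ = (d∘φ, φ∘d)`. -/
def δm (φ : V₀ →ₗ[ℝ] V₁) : End0 d :=
  ⟨(d ∘ₗ φ, φ ∘ₗ d), by
    rw [mem_End0]
    exact (comp_assoc _ _ _).symm⟩

/-- commutator bracket on `End⁰`. -/
def bkt0 (A B : End0 d) : End0 d :=
  ⟨(A.1.1 ∘ₗ B.1.1 - B.1.1 ∘ₗ A.1.1, A.1.2 ∘ₗ B.1.2 - B.1.2 ∘ₗ A.1.2), by
    have hA : A.1.1 ∘ₗ d = d ∘ₗ A.1.2 := A.2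
    have hB : B.1.1 ∘ₗ d = d ∘ₗ B.1.2 := B.2
    rw [mem_End0]
    have ha : ∀ x, A.1.1 (d x) = d (A.1.2 x) := fun x => LinearMap.congr_fun hA x
    have hb : ∀ x, B.1.1 (d x) = d (B.1.2 x) := fun x => LinearMap.congr_fun hB x
    ext m
    simp [ha, hb]⟩

/-- `[A,φ] = A₁ ∘ φ - φ ∘ A₀` for `A ∈ End⁰`, `φ ∈ End¹`. -/
def bktAφ (A : End0 d) (φ : V₀ →ₗ[ℝ] V₁) : V₀ →ₗ[ℝ] V₁ :=
  A.1.2 ∘ₗ φ - φ ∘ₗ A.1.1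

/-- `[φ,ψ]_δ = φ∘d∘ψ - ψ∘d∘φ`. -/
def bktδ (φ ψ : V₀ →ₗ[ℝ] V₁) : V₀ →ₗ[ℝ] V₁ :=
  φ ∘ₗ d ∘ₗ ψ - ψ ∘ₗ d ∘ₗ φ

/-- bracket on the morphism space `End⁰ ⊕ End¹` of `gl(𝕍)`. -/
def bkt (X Y : Gl d) : Gl d :=
  (bkt0 d X.1 Y.1, bktAφ d X.1 Y.2 - bktAφ d Y.1 X.2 + bktδ d X.2 Y.2)

/-- action of `gl(𝕍)` on `𝕍`:  `(A,φ)·(u,m) = (A₀u, A₁m + φ(u+dm))`. -/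
def act (X : Gl d) (ξ : V₀ × V₁) : V₀ × V₁ :=
  (X.1.1.1 ξ.1, X.1.1.2 ξ.2 + X.2 (ξ.1 + d ξ.2))

/-- the `𝕍`-valued pairing on `E`. -/
def pairE (e₁ e₂ : E d) : V₀ × V₁ :=
  (2⁻¹ : ℝ) • (act d e₁.1 e₂.2 + act d e₂.1 e₁.2)

/-- pairing at the level of objects. -/
def pairObj (x y : (End0 d) × V₀) : V₀ :=
  (2⁻¹ : ℝ) • (x.1.1.1 y.2 + y.1.1.1 x.2)

/-- the Courant bracket on `E`. -/
def courant (e₁ e₂ : E d) : E d :=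
  (bkt d e₁.1 e₂.1, (2⁻¹ : ℝ) • (act d e₁.1 e₂.2 - act d e₂.1 e₁.2))

/-- Courant bracket at the level of objects. -/
def courantObj (x y : (End0 d) × V₀) : (End0 d) × V₀ :=
  (bkt0 d x.1 y.1, (2⁻¹ : ℝ) • (x.1.1.1 y.2 - y.1.1.1 x.2))

/-- the Dorfman bracket on `E`. -/
def dorfman (e₁ e₂ : E d) : E d :=
  (bkt d e₁.1 e₂.1, act d e₁.1 e₂.2)

/-- source of a morphism of `gl(𝕍) ⊕ 𝕍`. -/
def sE (e : E d) : (End0 d) × V₀ := (e.1.1, e.2.1)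

/-- target of a morphism of `gl(𝕍) ⊕ 𝕍`. -/
def tE (e : E d) : (End0 d) × V₀ := (e.1.1 + δm d e.1.2, e.2.1 + d e.2.2)

/-- vertical composition of morphisms of `gl(𝕍) ⊕ 𝕍`. -/
def compE (e e' : E d) : E d := ((e.1.1, e.1.2 + e'.1.2), (e.2.1, e.2.2 + e'.2.2))

/-- vertical composition of morphisms of `𝕍`. -/
def compV (x y : V₀ × V₁) : V₀ × V₁ := (x.1, x.2 + y.2)

/-- orthogonal complement w.r.t. the `𝕍`-valued pairing. -/
def perp (L : Set (E d)) : Set (E d) := {e | ∀ l ∈ L, pairE d e l = 0}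

/-- bilinear functor data `(F₀, F_a, F_b)` for `𝕍`. -/
structure BilinData where
  F0 : V₀ →ₗ[ℝ] V₀ →ₗ[ℝ] V₀
  Fa : V₀ →ₗ[ℝ] V₁ →ₗ[ℝ] V₁
  Fb : V₁ →ₗ[ℝ] V₀ →ₗ[ℝ] V₁
  ha : ∀ u n, d (Fa u n) = F0 u (d n)
  hb : ∀ m v, d (Fb m v) = F0 (d m) v
  hc : ∀ m n, Fa (d m) n = Fb m (d n)

/-- `ad_F (u,m) = ((F₀(u,·), F_a(u,·)), F_b(m,·))`. -/
def adF (F : BilinData d) (ξ : V₀ × V₁) : Gl d :=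
  (⟨(F.F0 ξ.1, F.Fa ξ.1), by
      rw [mem_End0]
      ext n
      exact (F.ha ξ.1 n).symm⟩, F.Fb ξ.2)

/-- the graph `G_F = {(ad_F ξ, ξ)}`. -/
def graphF (F : BilinData d) : Set (E d) := {e | ∃ ξ : V₀ × V₁, e = (adF d F ξ, ξ)}

/-- an isomorphism `μ = (μ₀, μ₁, μ₂)` from the Lie 2-algebra `gl(𝕍)` to itself. -/
structure GlIso where
  μ0 : (End0 d) ≃ₗ[ℝ] (End0 d)
  μ1 : (Gl d) ≃ₗ[ℝ] (Gl d)
  hs : ∀ X : Gl d, (μ1 X).1 = μ0 X.1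
  ht : ∀ X : Gl d, (μ1 X).1 + δm d (μ1 X).2 = μ0 (X.1 + δm d X.2)
  hid : ∀ A : End0 d, μ1 (A, 0) = (μ0 A, 0)
  hcomp : ∀ (A : End0 d) (φ φ' : V₀ →ₗ[ℝ] V₁),
    μ1 (A, φ + φ') = ((μ1 (A, φ)).1, (μ1 (A, φ)).2 + (μ1 (A + δm d φ, φ')).2)
  μ2 : (End0 d) →ₗ[ℝ] (End0 d) →ₗ[ℝ] Gl d
  hskew : ∀ A B, μ2 A B = - μ2 B A
  hs2 : ∀ A B, (μ2 A B).1 = μ0 (bkt0 d A B)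
  ht2 : ∀ A B, (μ2 A B).1 + δm d (μ2 A B).2 = bkt0 d (μ0 A) (μ0 B)
  hnat : ∀ (A B : End0 d) (φ ψ : V₀ →ₗ[ℝ] V₁),
    (μ2 A B).2 + (bkt d (μ1 (A, φ)) (μ1 (B, ψ))).2
      = (μ1 (bkt d (A, φ) (B, ψ))).2 + (μ2 (A + δm d φ) (B + δm d ψ)).2
  hcoh : ∀ A B C : End0 d,
    (μ2 (bkt0 d A B) C).2 + (bkt d (μ2 A B) ((μ0 C, 0) : Gl d)).2
      = (μ2 A (bkt0 d B C)).2 + (μ2 B (bkt0 d C A)).2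
        + (bkt d ((μ0 A, 0) : Gl d) (μ2 B C)).2
        + (bkt d ((μ0 B, 0) : Gl d) (μ2 C A)).2

/-- the `μ`-twisted pairing on `E`. -/
def pairμ (μ : GlIso d) (e₁ e₂ : E d) : V₀ × V₁ :=
  (2⁻¹ : ℝ) • (act d (μ.μ1 e₁.1) e₂.2 + act d (μ.μ1 e₂.1) e₁.2)

/-- the `μ`-twisted Courant bracket on `E`. -/
def courantμ (μ : GlIso d) (e₁ e₂ : E d) : E d :=
  (bkt d e₁.1 e₂.1, (2⁻¹ : ℝ) • (act d (μ.μ1 e₁.1) e₂.2 - act d (μ.μ1 e₂.1) e₁.2))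

/-- orthogonal complement w.r.t. the `μ`-twisted pairing. -/
def perpμ (μ : GlIso d) (L : Set (E d)) : Set (E d) := {e | ∀ l ∈ L, pairμ d μ e l = 0}

/-- the `μ`-twisted Dorfman bracket at the level of objects. -/
def dorfObjμ (μ : GlIso d) (x y : (End0 d) × V₀) : (End0 d) × V₀ :=
  (bkt0 d x.1 y.1, (μ.μ0 x.1).1.1 y.2)

end Omni

end

open Omni

section Aux

variable {V₀ V₁ : Type*} [AddCommGroup V₀] [Module ℝ V₀] [AddCommGroup V₁] [Module ℝ V₁]
  (d : V₁ →ₗ[ℝ] V₀)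

lemma Omni.act_bkt (X Y : Gl d) (ξ : V₀ × V₁) :
    act d (bkt d X Y) ξ = act d X (act d Y ξ) - act d Y (act d X ξ) := by
  obtain ⟨⟨⟨X0, X1⟩, hX⟩, φ⟩ := X
  obtain ⟨⟨⟨Y0, Y1⟩, hY⟩, ψ⟩ := Y
  have hX' : ∀ m, X0 (d m) = d (X1 m) := fun m => LinearMap.congr_fun hX m
  have hY' : ∀ m, Y0 (d m) = d (Y1 m) := fun m => LinearMap.congr_fun hY m
  simp only [act, bkt, bkt0, bktAφ, bktδ, Prod.mk_sub_mk, Prod.ext_iff,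
    LinearMap.sub_apply, LinearMap.add_apply, LinearMap.comp_apply, map_add, map_sub,
    hX', hY']
  constructor <;> first | trivial | abel

lemma Omni.act_add_left (X Y : Gl d) (ξ : V₀ × V₁) :
    act d (X + Y) ξ = act d X ξ + act d Y ξ := by
  simp only [act, Prod.ext_iff, Prod.fst_add, Prod.snd_add]
  constructor
  · simp
  · simp only [Submodule.coe_add, Prod.snd_add, LinearMap.add_apply, map_add]
    abel

lemma Omni.act_sub_right (X : Gl d) (a b : V₀ × V₁) :
    act d X (a - b) = act d X a - act d X b := by
  simp only [act, Prod.ext_iff, Prod.fst_sub, Prod.snd_sub, map_sub, map_add]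
  constructor
  · trivial
  · abel

lemma Omni.act_neg_right (X : Gl d) (a : V₀ × V₁) :
    act d X (-a) = - act d X a := by
  simp only [act, Prod.ext_iff, Prod.fst_neg, Prod.snd_neg, map_neg, map_add]
  constructor
  · trivial
  · abel

lemma Omni.act_faithful (X : Gl d) (h : ∀ ξ : V₀ × V₁, act d X ξ = 0) : X = 0 := by
  obtain ⟨⟨⟨X0, X1⟩, hX⟩, φ⟩ := X
  have h1 : ∀ u : V₀, X0 u = 0 ∧ φ u = 0 := by
    intro u
    have := h (u, 0)
    simpa [act, Prod.ext_iff] using this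
  have h2 : ∀ m : V₁, X1 m = 0 := by
    intro m
    have := h (0, m)
    simp only [act, Prod.ext_iff, Prod.mk_eq_zero] at this
    have := this.2
    rwa [zero_add, (h1 (d m)).2, add_zero] at this
  refine Prod.ext (Subtype.ext (Prod.ext ?_ ?_)) ?_
  · ext x; simp [(h1 x).1]
  · ext m; simp [h2 m]
  · ext u; simp [(h1 u).2]

end Aux

open Omni in
/-- On an isotropic subspace closed under the Courant bracket, the Courant bracket satisfies
the Jacobi identity; hence a Dirac structure of the omni-Lie 2-algebra `gl(𝕍) ⊕ 𝕍` is a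
strict Lie 2-algebra. -/
theorem dirac_courant_jacobi {V₀ V₁ : Type*} [AddCommGroup V₀] [Module ℝ V₀] [AddCommGroup V₁] [Module ℝ V₁]
    [FiniteDimensional ℝ V₀] [FiniteDimensional ℝ V₁]
    (d : V₁ →ₗ[ℝ] V₀)
    (L : Submodule ℝ (E d))
    (hiso : ∀ e ∈ L, ∀ e' ∈ L, pairE d e e' = 0)
    (hclosed : ∀ e ∈ L, ∀ e' ∈ L, courant d e e' ∈ L) :
    ∀ e₁ ∈ L, ∀ e₂ ∈ L, ∀ e₃ ∈ L,
      courant d (courant d e₁ e₂) e₃ + courant d (courant d e₂ e₃) e₁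
        + courant d (courant d e₃ e₁) e₂ = 0 := by
  intro e₁ h₁ e₂ h₂ e₃ h₃
  -- antisymmetry of the action from isotropy
  have anti : ∀ a ∈ L, ∀ b ∈ L, act d a.1 b.2 = - act d b.1 a.2 := by
    intro a ha b hb
    have h0 : (2⁻¹ : ℝ) • (act d a.1 b.2 + act d b.1 a.2) = 0 := hiso a ha b hb
    have h2 : act d a.1 b.2 + act d b.1 a.2 = 0 := by
      rcases smul_eq_zero.mp h0 with h | h
      · norm_num at h
      · exact h
    exact eq_neg_of_add_eq_zero_left h2
  -- on L, the Courant bracket is the Dorfman bracket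
  have ceq : ∀ a ∈ L, ∀ b ∈ L, courant d a b = (bkt d a.1 b.1, act d a.1 b.2) := by
    intro a ha b hb
    unfold courant
    refine Prod.ext rfl ?_
    show (2⁻¹ : ℝ) • (act d a.1 b.2 - act d b.1 a.2) = act d a.1 b.2
    rw [anti b hb a ha, sub_neg_eq_add, ← two_smul ℝ, smul_smul]
    norm_num
  have c12 := hclosed e₁ h₁ e₂ h₂
  have c23 := hclosed e₂ h₂ e₃ h₃
  have c31 := hclosed e₃ h₃ e₁ h₁
  have E1 : courant d (courant d e₁ e₂) e₃
      = (bkt d (bkt d e₁.1 e₂.1) e₃.1, act d (bkt d e₁.1 e₂.1) e₃.2) :=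
    ceq _ c12 e₃ h₃
  have E2 : courant d (courant d e₂ e₃) e₁
      = (bkt d (bkt d e₂.1 e₃.1) e₁.1, act d (bkt d e₂.1 e₃.1) e₁.2) :=
    ceq _ c23 e₁ h₁
  have E3 : courant d (courant d e₃ e₁) e₂
      = (bkt d (bkt d e₃.1 e₁.1) e₂.1, act d (bkt d e₃.1 e₁.1) e₂.2) :=
    ceq _ c31 e₂ h₂
  rw [E1, E2, E3]
  refine Prod.ext ?_ ?_
  · -- Jacobi identity for the bracket on gl(𝕍), via the faithful action
    show bkt d (bkt d e₁.1 e₂.1) e₃.1 + bkt d (bkt d e₂.1 e₃.1) e₁.1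
        + bkt d (bkt d e₃.1 e₁.1) e₂.1 = 0
    apply act_faithful d
    intro ξ
    rw [act_add_left, act_add_left]
    simp only [act_bkt, act_sub_right]
    abel
  · -- vector part, using isotropy
    show act d (bkt d e₁.1 e₂.1) e₃.2 + act d (bkt d e₂.1 e₃.1) e₁.2
        + act d (bkt d e₃.1 e₁.1) e₂.2 = 0
    have h12 : act d (bkt d e₁.1 e₂.1) e₃.2 = - act d e₃.1 (act d e₁.1 e₂.2) := by
      have h := anti _ c12 e₃ h₃
      rwa [ceq e₁ h₁ e₂ h₂] at h
    have h31 : act d (bkt d e₃.1 e₁.1) e₂.2 = - act d e₂.1 (act d e₃.1 e₁.2) := by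
      have h := anti _ c31 e₂ h₂
      rwa [ceq e₃ h₃ e₁ h₁] at h
    have h21 : act d e₂.1 e₁.2 = - act d e₁.1 e₂.2 := anti e₂ h₂ e₁ h₁
    rw [h12, h31, act_bkt, h21, act_neg_right]
    abel
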